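/- Consider n players and m items, where each player i has an XOS valuation v_i : 2^{[m]} → ℝ≥0. Fix a selection rule g mapping each bid matrix b = (b_{ij})_{i∈[n], j∈[m]} with b_{ij} ≥ 0 to an assignment in which each item j goes to a player attaining max_i b_{ij}; the winner of item j pays her bid b_{ij}, so player i's utility is v_i(X_i(b)) − Σ_{j∈X_i(b)} b_{ij}, where X_i(b) is the set of items assigned to i. Suppose the bid matrix b is a pure Nash equilibrium: for every player i and every alternative bid vector b'_i ∈ ℝ_{≥0}^m, player i's utility at b is at least her utility at (b'_i, b_{−i}). Then Σ_{i=1}^n v_i(X_i(b)) ≥ (1/3)·max{ Σ_{i=1}^n v_i(S_i) : (S_1, …, S_n) a partition of [m] into disjoint sets }. (Simultaneous first-price item auctions with XOS bidders have price of anarchy at most 3 over pure Nash equilibria.) -/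

import Mathlib

/-- `v` is an XOS (fractionally subadditive) valuation over items indexed by `α`:
a pointwise maximum of a finite nonempty family of additive valuations with
nonnegative weights. -/
def IsXOS {α : Type*} [DecidableEq α] (v : Finset α → ℝ) : Prop :=
  ∃ L : Finset (α → ℝ), L.Nonempty ∧ (∀ w ∈ L, ∀ j, 0 ≤ w j) ∧
    ∀ X : Finset α, (∃ w ∈ L, v X = ∑ j ∈ X, w j) ∧ (∀ w ∈ L, ∑ j ∈ X, w j ≤ v X)

/-- **Price of anarchy of simultaneous first-price item auctions with XOS bidders.**
There are `n` players and `m` items; each player `i` has an XOS valuation `v i`.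
`g` is a selection rule assigning, for each nonnegative bid matrix, each item to a
player with a maximum bid on it; the winner of each item pays her bid, so player
`i`'s utility is `v_i(X_i(b)) − Σ_{j ∈ X_i(b)} b_{ij}` where
`X_i(b) = {j : g b j = i}`.  If the nonnegative bid matrix `b` is a pure Nash
equilibrium, then the welfare is at least `1/3` of the welfare of every partition
of the items among the players (hence at least `1/3` of the optimal welfare). -/
theorem simultaneous_first_price_poa
    (n m : ℕ)
    (v : Fin n → Finset (Fin m) → ℝ) (hv : ∀ i, IsXOS (v i))
    (g : (Fin n → Fin m → ℝ) → Fin m → Fin n)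
    (hg : ∀ b : Fin n → Fin m → ℝ, (∀ i j, 0 ≤ b i j) →
      ∀ j i, b i j ≤ b (g b j) j)
    (b : Fin n → Fin m → ℝ) (hb : ∀ i j, 0 ≤ b i j)
    (hNash : ∀ i : Fin n, ∀ b' : Fin m → ℝ, (∀ j, 0 ≤ b' j) →
      (v i (Finset.univ.filter (fun j => g b j = i)) -
          ∑ j ∈ Finset.univ.filter (fun j => g b j = i), b i j) ≥
        (v i (Finset.univ.filter (fun j => g (Function.update b i b') j = i)) -
          ∑ j ∈ Finset.univ.filter (fun j => g (Function.update b i b') j = i), b' j)) :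
    ∀ S : Fin n → Finset (Fin m),
      (∀ i i', i ≠ i' → Disjoint (S i) (S i')) →
      (Finset.univ.biUnion S = Finset.univ) →
      (∑ i, v i (Finset.univ.filter (fun j => g b j = i))) ≥
        (1/3) * ∑ i, v i (S i) := by
  intro S hdisj hcover
  classical
  set p : Fin m → ℝ := fun j => b (g b j) j with hp
  have hp0 : ∀ j, 0 ≤ p j := fun j => hb _ _
  set X : Fin n → Finset (Fin m) := fun i => Finset.univ.filter (fun j => g b j = i) with hX
  -- key per-player inequality
  have key : ∀ i : Fin n,
      v i (X i) - ∑ j ∈ X i, b i j ≥ v i (S i) / 2 - ∑ j ∈ S i, p j := by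
    intro i
    obtain ⟨L, hLne, hLnn, hLprop⟩ := hv i
    obtain ⟨w, hwL, hwS⟩ := (hLprop (S i)).1
    have hw0 : ∀ j, 0 ≤ w j := hLnn w hwL
    have hwle : ∀ Y, ∑ j ∈ Y, w j ≤ v i Y := fun Y => (hLprop Y).2 w hwL
    set b' : Fin m → ℝ := fun j => if j ∈ S i then w j / 2 else 0 with hb'
    have hb'0 : ∀ j, 0 ≤ b' j := by
      intro j; simp only [hb']
      split
      · linarith [hw0 j]
      · exact le_rfl
    set bd : Fin n → Fin m → ℝ := Function.update b i b' with hbd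
    have hbd0 : ∀ k j, 0 ≤ bd k j := by
      intro k j
      by_cases hk : k = i
      · subst hk; simp [hbd, hb'0 j]
      · simp [hbd, Function.update_of_ne hk, hb k j]
    set X' : Finset (Fin m) := Finset.univ.filter (fun j => g bd j = i) with hX'
    have hNi := hNash i b' hb'0
    -- payments under deviation
    have hpay : ∑ j ∈ X', b' j = ∑ j ∈ X'.filter (fun j => j ∈ S i), w j / 2 :=
      (Finset.sum_filter (fun j => j ∈ S i) (fun j => w j / 2)).symm
    -- value lower bound under deviation
    have hval : ∑ j ∈ X'.filter (fun j => j ∈ S i), w j ≤ v i X' := by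
      refine le_trans ?_ (hwle X')
      exact Finset.sum_le_sum_of_subset_of_nonneg (Finset.filter_subset _ _)
        (fun j _ _ => hw0 j)
    -- lost items are priced at least w j / 2
    have hlost : ∀ j ∈ S i, g bd j ≠ i → w j / 2 ≤ p j := by
      intro j hj hne
      have h1 : bd i j ≤ bd (g bd j) j := hg bd hbd0 j i
      have h2 : bd i j = w j / 2 := by simp [hbd, hb', hj]
      have h3 : bd (g bd j) j = b (g bd j) j := by
        exact congrFun (Function.update_of_ne hne _ _) j
      have h4 : b (g bd j) j ≤ b (g b j) j := hg b hb j (g bd j)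
      rw [h2, h3] at h1
      exact le_trans h1 h4
    -- split S i
    have hsplit : ∑ j ∈ S i, w j / 2 =
        (∑ j ∈ (S i).filter (fun j => g bd j = i), w j / 2) +
        ∑ j ∈ (S i).filter (fun j => ¬ g bd j = i), w j / 2 :=
      (Finset.sum_filter_add_sum_filter_not _ _ _).symm
    have hsets : (S i).filter (fun j => g bd j = i) = X'.filter (fun j => j ∈ S i) := by
      ext j
      simp only [Finset.mem_filter, hX', Finset.mem_univ, true_and]
      tauto
    have hlost2 : ∑ j ∈ (S i).filter (fun j => ¬ g bd j = i), w j / 2 ≤ ∑ j ∈ S i, p j := by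
      calc ∑ j ∈ (S i).filter (fun j => ¬ g bd j = i), w j / 2
          ≤ ∑ j ∈ (S i).filter (fun j => ¬ g bd j = i), p j := by
            refine Finset.sum_le_sum (fun j hj => ?_)
            rw [Finset.mem_filter] at hj
            exact hlost j hj.1 hj.2
        _ ≤ ∑ j ∈ S i, p j := Finset.sum_le_sum_of_subset_of_nonneg
            (Finset.filter_subset _ _) (fun j _ _ => hp0 j)
    have hdev : v i X' - ∑ j ∈ X', b' j ≥ ∑ j ∈ X'.filter (fun j => j ∈ S i), w j / 2 := by
      rw [hpay]
      have : ∑ j ∈ X'.filter (fun j => j ∈ S i), w j / 2 +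
          ∑ j ∈ X'.filter (fun j => j ∈ S i), w j / 2 =
          ∑ j ∈ X'.filter (fun j => j ∈ S i), w j := by
        rw [← Finset.sum_add_distrib]
        exact Finset.sum_congr rfl (fun j _ => by ring)
      linarith [hval]
    have hhalf : v i (S i) / 2 = ∑ j ∈ S i, w j / 2 := by
      rw [hwS, Finset.sum_div]
    have := hNi
    rw [hhalf]
    rw [hsets] at hsplit
    have hXX : (Finset.univ.filter (fun j => g b j = i)) = X i := rfl
    have hXX' : (Finset.univ.filter (fun j => g bd j = i)) = X' := rfl
    rw [hXX, hXX'] at this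
    linarith [hdev, hlost2, this, hsplit]
  -- sum payments at equilibrium equal total prices
  have hpaysum : ∑ i, ∑ j ∈ X i, b i j = ∑ j, p j := by
    rw [← Finset.sum_fiberwise_of_maps_to (g := fun j => g b j)
      (t := (Finset.univ : Finset (Fin n))) (fun j _ => Finset.mem_univ _) p]
    refine Finset.sum_congr rfl (fun i _ => Finset.sum_congr rfl ?_)
    intro j hj
    rw [Finset.mem_filter] at hj
    show b i j = b (g b j) j
    rw [hj.2]
  -- sum of prices over the partition equals total prices
  have hpartsum : ∑ i, ∑ j ∈ S i, p j = ∑ j, p j := by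
    rw [← hcover, Finset.sum_biUnion]
    intro i _ i' _ hne
    exact hdisj i i' hne
  have hsum' : ∑ i, (v i (S i) / 2 - ∑ j ∈ S i, p j) ≤ ∑ i, (v i (X i) - ∑ j ∈ X i, b i j) :=
    Finset.sum_le_sum (fun i _ => key i)
  rw [Finset.sum_sub_distrib, Finset.sum_sub_distrib, hpaysum, hpartsum] at hsum'
  have hhalfsum : ∑ i, v i (S i) / 2 = (∑ i, v i (S i)) / 2 := by
    rw [Finset.sum_div]
  have hmain : (∑ i, v i (S i)) / 2 ≤ ∑ i, v i (X i) := by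
    rw [hhalfsum] at hsum'
    linarith
  have hSnn : 0 ≤ ∑ i, v i (S i) := by
    refine Finset.sum_nonneg (fun i _ => ?_)
    obtain ⟨L, hLne, hLnn, hLprop⟩ := hv i
    obtain ⟨w, hwL, hwS⟩ := (hLprop (S i)).1
    rw [hwS]
    exact Finset.sum_nonneg (fun j _ => hLnn w hwL j)
  have : ∑ i, v i (X i) = ∑ i, v i (Finset.univ.filter (fun j => g b j = i)) := rfl
  rw [← this]
  linarith
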